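/- (Paraboson realization of an arbitrary Lie algebra.) Let L be a Lie algebra over ℂ (of finite or infinite dimension), let ρ : L → Matrix (Fin m) (Fin m) ℂ be a Lie algebra homomorphism into the matrix algebra with the commutator bracket, and let A be an associative unital ℂ-algebra containing a family of parabosons B_k^± (k ∈ Fin m). Then the ℂ-linear map J : L → A defined by J(X) := (1/2)·Σ_{k,l} ρ(X)_{kl}·{B_k^+, B_l^−} satisfies J(⁅X, Y⁆) = J(X)·J(Y) − J(Y)·J(X) for all X, Y ∈ L; consequently J extends uniquely to a ℂ-algebra homomorphism from the universal enveloping algebra U(L) to A. -/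

import Mathlib

open scoped BigOperators

noncomputable section

attribute [local instance 100] LieRing.ofAssociativeRing

/-- The ringComm `[x, y] = x * y - y * x`. -/
def ringComm {A : Type*} [Ring A] (x y : A) : A := x * y - y * x

/-- The ringAnticomm `{x, y} = x * y + y * x`. -/
def ringAnticomm {A : Type*} [Ring A] (x y : A) : A := x * y + y * x

/-- A family of parabosons: `B k 1 = B_k^+`, `B k (-1) = B_k^-`, satisfying the
paraboson trilinear relations. -/
def IsParabosonFamily {A : Type*} [Ring A] [Algebra ℂ A] {ι : Type*} [DecidableEq ι]
    (B : ι → ℂ → A) : Prop :=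
  ∀ (i j k : ι), ∀ ξ ∈ ({1, -1} : Set ℂ), ∀ η ∈ ({1, -1} : Set ℂ),
    ∀ ε ∈ ({1, -1} : Set ℂ),
      ringComm (ringAnticomm (B i ξ) (B j η)) (B k ε) =
        ((ε - η) * (if j = k then (1 : ℂ) else 0)) • B i ξ +
          ((ε - ξ) * (if i = k then (1 : ℂ) else 0)) • B j η

theorem paraboson_realization_of_Lie_algebra
    {A : Type*} [Ring A] [Algebra ℂ A] {m : ℕ}
    {L : Type*} [LieRing L] [LieAlgebra ℂ L]
    (ρ : L →ₗ⁅ℂ⁆ Matrix (Fin m) (Fin m) ℂ)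
    (B : Fin m → ℂ → A) (hB : IsParabosonFamily B)
    (J : L →ₗ[ℂ] A)
    (hJ : ∀ X : L, J X = (1 / 2 : ℂ) • ∑ k, ∑ l, ρ X k l • ringAnticomm (B k 1) (B l (-1))) :
    (∀ X Y : L, J ⁅X, Y⁆ = J X * J Y - J Y * J X) ∧
    ∃! φ : UniversalEnvelopingAlgebra ℂ L →ₐ[ℂ] A,
      ∀ X : L, φ (UniversalEnvelopingAlgebra.ι ℂ X) = J X := by
  classical
  set E : Fin m → Fin m → A := fun k l => ringAnticomm (B k 1) (B l (-1)) with hE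
  have h1 : ∀ k l p : Fin m, ringComm (E k l) (B p 1)
      = ((2 : ℂ) * (if l = p then 1 else 0)) • B k 1 := by
    intro k l p
    have := hB k l p 1 (by simp) (-1) (by simp) 1 (by simp)
    rw [hE]
    rw [this]
    norm_num
  have h2 : ∀ k l q : Fin m, ringComm (E k l) (B q (-1))
      = ((-2 : ℂ) * (if k = q then 1 else 0)) • B l (-1) := by
    intro k l q
    have := hB k l q 1 (by simp) (-1) (by simp) (-1) (by simp)
    rw [hE]
    rw [this]
    norm_num
  have leib : ∀ x a b : A, ringComm x (a * b + b * a)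
      = (ringComm x a) * b + a * (ringComm x b) + (ringComm x b) * a + b * (ringComm x a) := by
    intro x a b; simp only [ringComm]; noncomm_ring
  have hcomm : ∀ k l p q : Fin m, ringComm (E k l) (E p q)
      = ((2 : ℂ) * (if l = p then 1 else 0)) • E k q
        + ((-2 : ℂ) * (if k = q then 1 else 0)) • E p l := by
    intro k l p q
    have : ringComm (E k l) (E p q)
        = ringComm (E k l) (B p 1 * B q (-1) + B q (-1) * B p 1) := rfl
    rw [this, leib, h1, h2]
    simp only [hE, ringAnticomm, smul_mul_assoc, mul_smul_comm, smul_add]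
    module
  have pair_expand : ∀ (g : Fin m × Fin m → A),
      (∑ u : Fin m × Fin m, g u) = ∑ k, ∑ l, g (k, l) := by
    intro g; rw [← Finset.univ_product_univ, Finset.sum_product]
  -- key bracket identity
  have key : ∀ X Y : L, J ⁅X, Y⁆ = J X * J Y - J Y * J X := by
    intro X Y
    have sum_pair : ∀ a : Matrix (Fin m) (Fin m) ℂ,
        (∑ k, ∑ l, a k l • E k l) = ∑ u : Fin m × Fin m, a u.1 u.2 • E u.1 u.2 := by
      intro a
      rw [← Finset.univ_product_univ, Finset.sum_product]
    rw [hJ, hJ, hJ]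
    rw [smul_mul_smul_comm, smul_mul_smul_comm, ← smul_sub]
    rw [sum_pair, sum_pair, sum_pair]
    have expand : (∑ u : Fin m × Fin m, ρ X u.1 u.2 • E u.1 u.2) *
          (∑ v : Fin m × Fin m, ρ Y v.1 v.2 • E v.1 v.2)
        - (∑ v : Fin m × Fin m, ρ Y v.1 v.2 • E v.1 v.2) *
          (∑ u : Fin m × Fin m, ρ X u.1 u.2 • E u.1 u.2)
        = ∑ u : Fin m × Fin m, ∑ v : Fin m × Fin m,
            (ρ X u.1 u.2 * ρ Y v.1 v.2) • ringComm (E u.1 u.2) (E v.1 v.2) := by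
      rw [Finset.sum_mul_sum, Finset.sum_mul_sum]
      rw [Finset.sum_comm (s := (Finset.univ : Finset (Fin m × Fin m)))
        (t := (Finset.univ : Finset (Fin m × Fin m)))
        (f := fun (v : Fin m × Fin m) (u : Fin m × Fin m) =>
          (ρ Y v.1 v.2 • E v.1 v.2) * (ρ X u.1 u.2 • E u.1 u.2))]
      rw [← Finset.sum_sub_distrib]
      refine Finset.sum_congr rfl fun u _ => ?_
      rw [← Finset.sum_sub_distrib]
      refine Finset.sum_congr rfl fun v _ => ?_
      rw [smul_mul_smul_comm, smul_mul_smul_comm, mul_comm (ρ Y v.1 v.2), ← smul_sub]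
      rfl
    rw [expand]
    simp only [hcomm, smul_add, smul_smul]
    simp only [Finset.sum_add_distrib]
    have S1eq : (∑ u : Fin m × Fin m, ∑ v : Fin m × Fin m,
          (ρ X u.1 u.2 * ρ Y v.1 v.2 * ((2 : ℂ) * if u.2 = v.1 then 1 else 0)) • E u.1 v.2)
        = ∑ k, ∑ q, ((2 : ℂ) * (ρ X * ρ Y) k q) • E k q := by
      simp only [pair_expand]
      simp only [mul_ite, mul_one, mul_zero, ite_smul, zero_smul, Finset.sum_ite_irrel,
        Finset.sum_const_zero, Finset.sum_ite_eq, Finset.mem_univ, if_true]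
      refine Finset.sum_congr rfl fun k _ => ?_
      rw [Finset.sum_comm]
      refine Finset.sum_congr rfl fun q _ => ?_
      rw [← Finset.sum_smul]
      congr 1
      rw [Matrix.mul_apply, Finset.mul_sum]
      exact Finset.sum_congr rfl fun l _ => by ring
    have S2eq : (∑ u : Fin m × Fin m, ∑ v : Fin m × Fin m,
          (ρ X u.1 u.2 * ρ Y v.1 v.2 * ((-2 : ℂ) * if u.1 = v.2 then 1 else 0)) • E v.1 u.2)
        = ∑ p, ∑ l, ((-2 : ℂ) * (ρ Y * ρ X) p l) • E p l := by
      simp only [pair_expand]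
      simp only [mul_ite, mul_one, mul_zero, ite_smul, zero_smul, Finset.sum_ite_irrel,
        Finset.sum_const_zero, Finset.sum_ite_eq, Finset.mem_univ, if_true]
      calc (∑ k, ∑ l, ∑ p, (ρ X k l * ρ Y p k * (-2 : ℂ)) • E p l)
          = ∑ l, ∑ p, ∑ k, (ρ X k l * ρ Y p k * (-2 : ℂ)) • E p l := by
            rw [Finset.sum_comm]
            exact Finset.sum_congr rfl fun l _ => Finset.sum_comm
        _ = ∑ p, ∑ l, ∑ k, (ρ X k l * ρ Y p k * (-2 : ℂ)) • E p l := Finset.sum_comm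
        _ = ∑ p, ∑ l, ((-2 : ℂ) * (ρ Y * ρ X) p l) • E p l := by
            refine Finset.sum_congr rfl fun p _ => Finset.sum_congr rfl fun l _ => ?_
            rw [← Finset.sum_smul]
            congr 1
            rw [Matrix.mul_apply, Finset.mul_sum]
            exact Finset.sum_congr rfl fun k _ => by ring
    rw [S1eq, S2eq]
    -- LHS side
    rw [pair_expand (fun u => ρ ⁅X, Y⁆ u.1 u.2 • E u.1 u.2)]
    simp only [LieHom.map_lie, Ring.lie_def, Matrix.sub_apply, sub_smul, smul_add,
      Finset.smul_sum, smul_smul, Finset.sum_sub_distrib, smul_sub]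
    rw [sub_eq_add_neg, ← Finset.sum_neg_distrib]
    congr 1
    · refine Finset.sum_congr rfl fun k _ => Finset.sum_congr rfl fun l _ => ?_
      congr 1; ring
    · simp only [← Finset.sum_neg_distrib, ← neg_smul]
      refine Finset.sum_congr rfl fun k _ => Finset.sum_congr rfl fun l _ => ?_
      congr 1; ring
  refine ⟨key, ?_⟩
  let f : L →ₗ⁅ℂ⁆ A :=
    { toLinearMap := J
      map_lie' := by intro x y; simpa [Ring.lie_def] using key x y }
  refine ⟨UniversalEnvelopingAlgebra.lift ℂ f,
    fun X => UniversalEnvelopingAlgebra.lift_ι_apply ℂ f X, ?_⟩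
  intro ψ hψ
  ext x
  have h := hψ x
  simp at h ⊢
  exact h

end
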